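/- Let Γ be the paradigm of all i.i.d. probability measures on {0,1}^ℕ (i.e., all measures of the form ε_{δ_q} for q ∈ [0,1], under which the coordinates are i.i.d. with success probability q). Let T be the prequential test that passes the expert over realization x = (s_0,s_1,…) with forecasts (p_0,p_1,…) if and only if p_n = limsup_{k→∞} (s_0 + … + s_{k-1})/k for every n ≥ 0. Then T accepts the data-generating process in Γ with probability 1 (μ(A_μ^T) = 1 for every μ ∈ Γ), and T is strongly non-manipulable with respect to Γ: for every Borel probability measure ζ on Γ, (ζ ⊗ μ)({(ν, x) : x ∈ A_ν^T}) = 0 for co-meager many μ ∈ Γ. -/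

import Mathlib

open MeasureTheory Filter

/-- The realization space Ω = {0,1}^ℕ. -/
abbrev Omega : Type := ℕ → Bool

/-- The cylinder set N(σ) of realizations extending the partial realization σ. -/
def cyl (σ : List Bool) : Set Omega := {x | ∀ i : Fin σ.length, x i.1 = σ.get i}

/-- The partial realization (s₀, …, s_{n-1}) consisting of the first n outcomes of x. -/
def pref (x : Omega) (n : ℕ) : List Bool := List.ofFn (fun i : Fin n => x i.1)

/-- The forecast μ(1 | σ) = μ(N(σ·1))/μ(N(σ)). -/
noncomputable def forecastOne (μ : Measure Omega) (σ : List Bool) : ℝ :=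
  (μ (cyl (σ ++ [true]))).toReal / (μ (cyl σ)).toReal

/-- ∏_{i<n} q^{s_i} (1-q)^{1-s_i} for the partial realization σ. -/
noncomputable def bern (σ : List Bool) (q : unitInterval) : ℝ :=
  ∏ i : Fin σ.length, (if σ.get i then (q : ℝ) else 1 - (q : ℝ))

/-- The paradigm of all i.i.d. theories: coordinates are i.i.d. Bernoulli(q), q ∈ [0,1]. -/
noncomputable def IIDparadigm : Set (ProbabilityMeasure Omega) :=
  {μ | ∃ q : unitInterval, ∀ σ : List Bool,
    (μ : Measure Omega) (cyl σ) = ENNReal.ofReal (bern σ q)}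

/-- The limit average limsup_k (s₀+⋯+s_{k-1})/k of a sequence of outcomes. -/
noncomputable def limAvg (s : ℕ → Bool) : ℝ :=
  Filter.limsup
    (fun k : ℕ => (∑ i ∈ Finset.range k, (if s i then (1 : ℝ) else 0)) / k) atTop

/-- The acceptance set A_μ^T : realizations over which μ passes the prequential test T. -/
def acceptSet (T : (ℕ → ℝ × Bool) → Bool) (μ : Measure Omega) : Set Omega :=
  {x | (∀ n : ℕ, 0 < μ (cyl (pref x n))) ∧
    T (fun n => (forecastOne μ (pref x n), x n)) = true}

noncomputable instance : MeasurableSpace (ProbabilityMeasure Omega) := borel _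


/-- Bernoulli weight of a single outcome. -/
noncomputable def bw (q : unitInterval) (b : Bool) : ℝ := if b then (q : ℝ) else 1 - (q : ℝ)

lemma bw_nonneg (q : unitInterval) (b : Bool) : 0 ≤ bw q b := by
  cases b
  · simp only [bw]; simp; linarith [q.2.2]
  · simp [bw, q.2.1]

lemma bw_le_one (q : unitInterval) (b : Bool) : bw q b ≤ 1 := by
  cases b
  · simp only [bw]; simp; linarith [q.2.1]
  · simp [bw, q.2.2]

@[simp] lemma bern_nil (q : unitInterval) : bern [] q = 1 := by simp [bern]

lemma bern_cons (b : Bool) (σ : List Bool) (q : unitInterval) :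
    bern (b :: σ) q = bw q b * bern σ q := by
  simp only [bern, List.length_cons]
  rw [Fin.prod_univ_succ]
  rfl

lemma bern_append (σ : List Bool) (b : Bool) (q : unitInterval) :
    bern (σ ++ [b]) q = bern σ q * bw q b := by
  induction σ with
  | nil => simp [bern_cons]
  | cons a σ ih =>
      rw [List.cons_append, bern_cons, ih, bern_cons]; ring

lemma bern_nonneg (σ : List Bool) (q : unitInterval) : 0 ≤ bern σ q := by
  induction σ with
  | nil => simp
  | cons a σ ih => rw [bern_cons]; exact mul_nonneg (bw_nonneg q a) ih

lemma bern_ofFn {n : ℕ} (v : Fin n → Bool) (q : unitInterval) :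
    bern (List.ofFn v) q = ∏ i, bw q (v i) := by
  induction n with
  | zero =>
      simp only [List.ofFn_zero]
      simp [Finset.univ_eq_empty, bern]
  | succ n ih =>
      rw [List.ofFn_succ, bern_cons, ih, Fin.prod_univ_succ]

lemma measurableSet_cyl (σ : List Bool) : MeasurableSet (cyl σ) := by
  have : cyl σ = ⋂ i : Fin σ.length, {x : Omega | x i.1 = σ.get i} := by
    ext x; simp [cyl]
  rw [this]
  refine MeasurableSet.iInter fun i => ?_
  have : {x : Omega | x i.1 = σ.get i} = (fun x : Omega => x i.1) ⁻¹' {σ.get i} := rfl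
  rw [this]
  exact measurable_pi_apply (i.1 : ℕ) (MeasurableSet.singleton (σ.get i))

@[simp] lemma cyl_nil : cyl [] = Set.univ := by
  ext x; simp [cyl]

lemma pref_zero (x : Omega) : pref x 0 = [] := by simp [pref]

lemma pref_succ (x : Omega) (n : ℕ) : pref x (n + 1) = pref x n ++ [x n] := by
  rw [pref, List.ofFn_succ', List.concat_eq_append, pref]
  rfl

def proj (n : ℕ) : Omega → (Fin n → Bool) := fun x i => x i.1

lemma measurable_proj (n : ℕ) : Measurable (proj n) :=
  measurable_pi_lambda _ fun i => measurable_pi_apply _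

lemma cyl_ofFn {n : ℕ} (v : Fin n → Bool) : cyl (List.ofFn v) = proj n ⁻¹' {v} := by
  ext x
  simp only [cyl, Set.mem_setOf_eq, Set.mem_preimage, Set.mem_singleton_iff, proj]
  constructor
  · intro h
    funext i
    have := h ⟨i.1, by simp⟩
    simp only [List.get_ofFn] at this
    rw [proj]
    convert this using 2
    exact Fin.ext rfl
  · intro h i
    subst h
    simp only [List.get_ofFn]
    rfl

noncomputable def pE (q : unitInterval) (b : Bool) : ENNReal := ENNReal.ofReal (bw q b)

lemma pE_add (q : unitInterval) : pE q true + pE q false = 1 := by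
  rw [pE, pE, ← ENNReal.ofReal_add (bw_nonneg q true) (bw_nonneg q false)]
  have : bw q true + bw q false = 1 := by simp [bw]
  rw [this, ENNReal.ofReal_one]

section marginals

variable {μ : Measure Omega} {q : unitInterval}
variable (hq : ∀ σ : List Bool, μ (cyl σ) = ENNReal.ofReal (bern σ q))

include hq

lemma marg (n : ℕ) (S : Finset (Fin n → Bool)) :
    μ (proj n ⁻¹' ↑S) = ∑ v ∈ S, ∏ i, pE q (v i) := by
  have hdecomp : (proj n ⁻¹' ↑S) = ⋃ v ∈ S, proj n ⁻¹' {v} := by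
    ext x; simp
  rw [hdecomp, measure_biUnion_finset]
  · refine Finset.sum_congr rfl fun v _ => ?_
    rw [← cyl_ofFn, hq, bern_ofFn]
    rw [ENNReal.ofReal_prod_of_nonneg (fun i _ => bw_nonneg q (v i))]
    rfl
  · intro v _ w _ hvw
    simp only [Function.onFun]
    apply Set.disjoint_left.2
    intro x hx hx'
    exact hvw (hx.symm.trans hx')
  · intro v _
    rw [← cyl_ofFn]; exact measurableSet_cyl _

omit hq in
lemma sum_prod_bool {n : ℕ} (g : Fin n → Bool → ENNReal) :
    ∑ v : Fin n → Bool, ∏ i, g i (v i) = ∏ i, (g i true + g i false) := by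
  have h := Finset.prod_univ_sum (fun _ : Fin n => (Finset.univ : Finset Bool)) (fun i b => g i b)
  rw [Fintype.piFinset_univ] at h
  rw [← h]
  refine Finset.prod_congr rfl fun i _ => ?_
  simp

omit hq in
lemma event_single (i : ℕ) (b : Bool) :
    {x : Omega | x i = b} =
      proj (i + 1) ⁻¹' ↑(Finset.univ.filter (fun v : Fin (i + 1) → Bool => v (Fin.last i) = b)) := by
  ext x
  simp only [Set.mem_setOf_eq, Set.mem_preimage, Finset.coe_filter, Finset.mem_univ, true_and,
    Set.mem_setOf_eq]
  rfl

lemma marg_single (i : ℕ) (b : Bool) : μ {x : Omega | x i = b} = pE q b := by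
  rw [event_single i b, marg hq]
  set g : Fin (i + 1) → Bool → ENNReal :=
    fun k c => if k = Fin.last i then (if c = b then pE q b else 0) else pE q c with hg
  have h1 : ∑ v ∈ Finset.univ.filter (fun v : Fin (i + 1) → Bool => v (Fin.last i) = b),
      ∏ k, pE q (v k) = ∑ v : Fin (i + 1) → Bool, ∏ k, g k (v k) := by
    rw [Finset.sum_filter]
    refine Finset.sum_congr rfl fun v _ => ?_
    by_cases hv : v (Fin.last i) = b
    · rw [if_pos hv]
      refine Finset.prod_congr rfl fun k _ => ?_
      by_cases hk : k = Fin.last i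
      · subst hk; rw [hg]; simp [hv]
      · rw [hg]; simp [hk]
    · rw [if_neg hv]
      symm
      apply Finset.prod_eq_zero (Finset.mem_univ (Fin.last i))
      rw [hg]; simp [hv]
  rw [h1, sum_prod_bool]
  have h2 : ∀ k, k ≠ Fin.last i → g k true + g k false = 1 := by
    intro k hk; rw [hg]; simp only [if_neg hk]; exact pE_add q
  have h3 : g (Fin.last i) true + g (Fin.last i) false = pE q b := by
    rw [hg]; cases b <;> simp
  calc ∏ k, (g k true + g k false) = g (Fin.last i) true + g (Fin.last i) false := by
        apply Finset.prod_eq_single (Fin.last i)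
        · intro k _ hk; exact h2 k hk
        · intro h; exact absurd (Finset.mem_univ _) h
    _ = pE q b := h3

lemma marg_pair {i j : ℕ} (hij : i ≠ j) (a b : Bool) :
    μ {x : Omega | x i = a ∧ x j = b} = pE q a * pE q b := by
  set n := max i j + 1 with hn
  have hi : i < n := by omega
  have hj : j < n := by omega
  set I : Fin n := ⟨i, hi⟩
  set J : Fin n := ⟨j, hj⟩
  have hIJ : I ≠ J := by
    intro h
    exact hij (congrArg Fin.val h)
  have hev : {x : Omega | x i = a ∧ x j = b} =
      proj n ⁻¹' ↑(Finset.univ.filter (fun v : Fin n → Bool => v I = a ∧ v J = b)) := by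
    ext x
    simp only [Set.mem_setOf_eq, Set.mem_preimage, Finset.coe_filter, Finset.mem_univ, true_and,
      Set.mem_setOf_eq]
    rfl
  rw [hev, marg hq]
  set g : Fin n → Bool → ENNReal :=
    fun k c => if k = I then (if c = a then pE q a else 0)
      else if k = J then (if c = b then pE q b else 0) else pE q c with hg
  have h1 : ∑ v ∈ Finset.univ.filter (fun v : Fin n → Bool => v I = a ∧ v J = b),
      ∏ k, pE q (v k) = ∑ v : Fin n → Bool, ∏ k, g k (v k) := by
    rw [Finset.sum_filter]
    refine Finset.sum_congr rfl fun v _ => ?_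
    by_cases hva : v I = a
    · by_cases hvb : v J = b
      · rw [if_pos ⟨hva, hvb⟩]
        refine Finset.prod_congr rfl fun k _ => ?_
        by_cases hkI : k = I
        · subst hkI; rw [hg]; simp [hva]
        · by_cases hkJ : k = J
          · subst hkJ; rw [hg]; simp [if_neg hkI, hvb]
          · rw [hg]; simp [hkI, hkJ]
      · rw [if_neg (by tauto)]
        symm
        apply Finset.prod_eq_zero (Finset.mem_univ J)
        rw [hg]; simp [hvb]
        intro h; exact absurd h.symm hIJ
    · rw [if_neg (by tauto)]
      symm
      apply Finset.prod_eq_zero (Finset.mem_univ I)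
      rw [hg]; simp [hva]
  rw [h1, sum_prod_bool]
  have hfac : ∀ k, k ≠ I → k ≠ J → g k true + g k false = 1 := by
    intro k hkI hkJ; rw [hg]; simp only [if_neg hkI, if_neg hkJ]; exact pE_add q
  have hfI : g I true + g I false = pE q a := by
    rw [hg]; cases a <;> simp
  have hfJ : g J true + g J false = pE q b := by
    rw [hg]; simp only [if_neg hIJ.symm]; cases b <;> simp
  calc ∏ k, (g k true + g k false)
      = ∏ k ∈ ({I, J} : Finset (Fin n)), (g k true + g k false) := by
        symm
        apply Finset.prod_subset (Finset.subset_univ _)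
        intro k _ hk
        simp only [Finset.mem_insert, Finset.mem_singleton] at hk
        push_neg at hk
        exact hfac k hk.1 hk.2
    _ = pE q a * pE q b := by
        rw [Finset.prod_pair hIJ, hfI, hfJ]

end marginals

open ProbabilityTheory Topology

/-- outcome as a real random variable -/
noncomputable def Xrv (i : ℕ) : Omega → ℝ := fun x => if x i then (1 : ℝ) else 0

def gbr : Bool → ℝ := fun b => if b then (1 : ℝ) else 0

lemma Xrv_eq (i : ℕ) : Xrv i = gbr ∘ (fun x : Omega => x i) := rfl

lemma measurable_coord (i : ℕ) : Measurable (fun x : Omega => x i) := measurable_pi_apply i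

section law

variable {μ : Measure Omega} {q : unitInterval}
variable (hq : ∀ σ : List Bool, μ (cyl σ) = ENNReal.ofReal (bern σ q))

lemma isProb (h : ∀ σ : List Bool, μ (cyl σ) = ENNReal.ofReal (bern σ q)) :
    IsProbabilityMeasure μ := by
  constructor
  have := h []
  simpa using this

include hq

lemma map_coord (i : ℕ) :
    μ.map (fun x : Omega => x i) = μ.map (fun x : Omega => x 0) := by
  rw [MeasureTheory.Measure.ext_iff_singleton]
  intro a
  rw [Measure.map_apply (measurable_coord i) (measurableSet_singleton a),
    Measure.map_apply (measurable_coord 0) (measurableSet_singleton a)]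
  have h1 : (fun x : Omega => x i) ⁻¹' {a} = {x : Omega | x i = a} := rfl
  have h2 : (fun x : Omega => x 0) ⁻¹' {a} = {x : Omega | x 0 = a} := rfl
  rw [h1, h2, marg_single hq, marg_single hq]

lemma indep_coord {i j : ℕ} (hij : i ≠ j) :
    IndepFun (fun x : Omega => x i) (fun x : Omega => x j) μ := by
  have : IsProbabilityMeasure μ := isProb hq
  rw [indepFun_iff_map_prod_eq_prod_map_map (measurable_coord i).aemeasurable
    (measurable_coord j).aemeasurable]
  rw [MeasureTheory.Measure.ext_iff_singleton]
  rintro ⟨a, b⟩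
  rw [Measure.map_apply ((measurable_coord i).prodMk (measurable_coord j))
    (measurableSet_singleton _)]
  have h1 : (fun x : Omega => (x i, x j)) ⁻¹' {(a, b)} = {x : Omega | x i = a ∧ x j = b} := by
    ext x; simp [Prod.ext_iff]
  rw [h1, marg_pair hq hij]
  rw [← Set.singleton_prod_singleton, Measure.prod_prod,
    Measure.map_apply (measurable_coord i) (measurableSet_singleton a),
    Measure.map_apply (measurable_coord j) (measurableSet_singleton b)]
  have h2 : (fun x : Omega => x i) ⁻¹' {a} = {x : Omega | x i = a} := rfl
  have h3 : (fun x : Omega => x j) ⁻¹' {b} = {x : Omega | x j = b} := rfl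
  rw [h2, h3, marg_single hq, marg_single hq]

lemma slln : ∀ᵐ x ∂μ, Tendsto
    (fun k : ℕ => (∑ i ∈ Finset.range k, (if x i then (1 : ℝ) else 0)) / (k : ℝ))
    atTop (𝓝 (q : ℝ)) := by
  have : IsProbabilityMeasure μ := isProb hq
  have hXmeas : ∀ i, Measurable (Xrv i) := fun i => by
    rw [Xrv_eq]
    exact (measurable_of_countable gbr).comp (measurable_coord i)
  have hint : Integrable (Xrv 0) μ := by
    refine (integrable_const (1 : ℝ)).mono' (hXmeas 0).aestronglyMeasurable ?_
    refine ae_of_all _ fun x => ?_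
    rw [Xrv]
    split <;> simp
  have hindep : Pairwise (Function.onFun (IndepFun · · μ) Xrv) := by
    intro i j hij
    rw [Function.onFun, Xrv_eq, Xrv_eq]
    exact (indep_coord hq hij).comp (measurable_of_countable gbr) (measurable_of_countable gbr)
  have hident : ∀ i, IdentDistrib (Xrv i) (Xrv 0) μ μ := by
    intro i
    refine ⟨(hXmeas i).aemeasurable, (hXmeas 0).aemeasurable, ?_⟩
    rw [Xrv_eq, Xrv_eq, ← Measure.map_map (measurable_of_countable gbr) (measurable_coord i),
      ← Measure.map_map (measurable_of_countable gbr) (measurable_coord 0), map_coord hq]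
  have hmean : ∫ x, Xrv 0 x ∂μ = (q : ℝ) := by
    have hind : Xrv 0 = Set.indicator {x : Omega | x 0 = true} (1 : Omega → ℝ) := by
      funext y
      simp [Xrv, Set.indicator]
    rw [hind, integral_indicator_one]
    · rw [measureReal_def, marg_single hq, pE]
      rw [ENNReal.toReal_ofReal (bw_nonneg q true)]
      rfl
    · exact measurable_coord 0 (measurableSet_singleton true)
  have := strong_law_ae_real Xrv hint hindep hident
  rw [hmean] at this
  filter_upwards [this] with x hx
  exact hx

lemma pos_ae : ∀ᵐ x ∂μ, ∀ n : ℕ, 0 < bern (pref x n) q := by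
  have : IsProbabilityMeasure μ := isProb hq
  have key : ∀ᵐ x ∂μ, ∀ i : ℕ,
      ((q : ℝ) ≠ 0 ∨ x i = false) ∧ ((q : ℝ) ≠ 1 ∨ x i = true) := by
    rw [ae_all_iff]
    intro i
    have h1 : ∀ᵐ x ∂μ, ((q : ℝ) ≠ 0 ∨ x i = false) := by
      by_cases hq0 : (q : ℝ) = 0
      · have : μ {x : Omega | x i = true} = 0 := by
          rw [marg_single hq, pE]
          simp [bw, hq0]
        have h2 : ∀ᵐ x ∂μ, ¬ (x i = true) := by
          rw [ae_iff]; simpa using this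
        filter_upwards [h2] with x hx
        right
        simpa using hx
      · exact ae_of_all _ fun x => Or.inl hq0
    have h2 : ∀ᵐ x ∂μ, ((q : ℝ) ≠ 1 ∨ x i = true) := by
      by_cases hq1 : (q : ℝ) = 1
      · have : μ {x : Omega | x i = false} = 0 := by
          rw [marg_single hq, pE]
          simp [bw, hq1]
        have h2 : ∀ᵐ x ∂μ, ¬ (x i = false) := by
          rw [ae_iff]; simpa using this
        filter_upwards [h2] with x hx
        right
        simpa using hx
      · exact ae_of_all _ fun x => Or.inl hq1
    filter_upwards [h1, h2] with x ha hb
    exact ⟨ha, hb⟩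
  filter_upwards [key] with x hx
  intro n
  induction n with
  | zero => rw [pref_zero]; simp
  | succ n ih =>
      rw [pref_succ, bern_append]
      refine mul_pos ih ?_
      rcases Bool.eq_false_or_eq_true (x n) with h | h
      · rw [h]
        have hb : bw q true = (q : ℝ) := rfl
        rw [hb]
        rcases (hx n).1 with h' | h'
        · exact lt_of_le_of_ne q.2.1 (Ne.symm h')
        · rw [h] at h'; exact absurd h' (by simp)
      · rw [h]
        have hb : bw q false = 1 - (q : ℝ) := rfl
        rw [hb]
        rcases (hx n).2 with h' | h'
        · have h2 := q.2.2
          have : (q : ℝ) < 1 := lt_of_le_of_ne h2 h'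
          linarith
        · rw [h] at h'; exact absurd h' (by simp)

lemma forecast_eq {σ : List Bool} (hpos : 0 < bern σ q) : forecastOne μ σ = (q : ℝ) := by
  rw [forecastOne, hq, hq, bern_append,
    ENNReal.toReal_ofReal (mul_nonneg (bern_nonneg σ q) (bw_nonneg q true)),
    ENNReal.toReal_ofReal (bern_nonneg σ q)]
  have hb : bw q true = (q : ℝ) := rfl
  rw [hb, mul_comm, mul_div_assoc, div_self (ne_of_gt hpos), mul_one]

lemma accept_ae_mem (T : (ℕ → ℝ × Bool) → Bool)
    (hT : ∀ f : ℕ → ℝ × Bool,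
      T f = true ↔ ∀ n : ℕ, (f n).1 = limAvg (fun k => (f k).2)) :
    ∀ᵐ x ∂μ, x ∈ acceptSet T μ := by
  filter_upwards [slln hq, pos_ae hq] with x hsl hpos
  constructor
  · intro n
    rw [hq]
    exact ENNReal.ofReal_pos.2 (hpos n)
  · rw [hT]
    intro n
    simp only
    have hlim : limAvg (fun k => x k) = (q : ℝ) := hsl.limsup_eq
    rw [hlim]
    exact forecast_eq hq (hpos n)

lemma accept_prob_one (T : (ℕ → ℝ × Bool) → Bool)
    (hT : ∀ f : ℕ → ℝ × Bool,
      T f = true ↔ ∀ n : ℕ, (f n).1 = limAvg (fun k => (f k).2)) :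
    μ (acceptSet T μ) = 1 := by
  have : IsProbabilityMeasure μ := isProb hq
  have h := accept_ae_mem hq T hT
  rw [ae_iff] at h
  refine le_antisymm prob_le_one ?_
  have : (1 : ENNReal) = μ Set.univ := (measure_univ).symm
  rw [this]
  calc μ Set.univ = μ (acceptSet T μ ∪ (acceptSet T μ)ᶜ) := by rw [Set.union_compl_self]
    _ ≤ μ (acceptSet T μ) + μ (acceptSet T μ)ᶜ := measure_union_le _ _
    _ = μ (acceptSet T μ) := by
        have hc : μ (acceptSet T μ)ᶜ = 0 := by
          have : (acceptSet T μ)ᶜ = {x | ¬ x ∈ acceptSet T μ} := rfl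
          rw [this]; exact h
        rw [hc, add_zero]

end law

lemma event_single_as_union (i : ℕ) (b : Bool) :
    {x : Omega | x i = b} =
      ⋃ v ∈ Finset.univ.filter (fun v : Fin (i + 1) → Bool => v (Fin.last i) = b),
        cyl (List.ofFn v) := by
  rw [event_single i b]
  have : (proj (i+1)) ⁻¹'
      ↑(Finset.univ.filter (fun v : Fin (i + 1) → Bool => v (Fin.last i) = b)) =
      ⋃ v ∈ Finset.univ.filter (fun v : Fin (i + 1) → Bool => v (Fin.last i) = b),
        proj (i+1) ⁻¹' {v} := by
    ext x; simp
  rw [this]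
  refine Set.iUnion₂_congr fun v _ => ?_
  rw [cyl_ofFn]

lemma generateFrom_cyl :
    (inferInstance : MeasurableSpace Omega) = MeasurableSpace.generateFrom (Set.range cyl) := by
  refine le_antisymm ?_ ?_
  · have hpi : (inferInstance : MeasurableSpace Omega) =
        ⨆ i : ℕ, MeasurableSpace.comap (fun x : Omega => x i) inferInstance := rfl
    rw [hpi]
    refine iSup_le fun i => ?_
    rintro t ⟨s, -, rfl⟩
    have hdec : (fun x : Omega => x i) ⁻¹' s = ⋃ b ∈ s, {x : Omega | x i = b} := by
      ext x; simp
    rw [hdec]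
    refine MeasurableSet.biUnion s.to_countable fun b _ => ?_
    rw [event_single_as_union i b]
    refine Set.Finite.measurableSet_biUnion (Finset.finite_toSet _) fun v _ => ?_
    exact MeasurableSpace.measurableSet_generateFrom ⟨List.ofFn v, rfl⟩
  · refine MeasurableSpace.generateFrom_le ?_
    rintro t ⟨σ, rfl⟩
    exact measurableSet_cyl σ

lemma cyl_inter_sub {σ τ : List Bool} (h : σ.length ≤ τ.length)
    (x₀ : Omega) (hx : x₀ ∈ cyl σ ∩ cyl τ) : cyl τ ⊆ cyl σ := by
  intro y hy
  intro i
  have h1 : y i.1 = τ.get ⟨i.1, lt_of_lt_of_le i.2 h⟩ := hy ⟨i.1, lt_of_lt_of_le i.2 h⟩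
  have h2 : x₀ i.1 = τ.get ⟨i.1, lt_of_lt_of_le i.2 h⟩ := hx.2 ⟨i.1, lt_of_lt_of_le i.2 h⟩
  have h3 : x₀ i.1 = σ.get i := hx.1 i
  rw [h1, ← h2, h3]

lemma isPiSystem_cyl : IsPiSystem (Set.range cyl) := by
  rintro s ⟨σ, rfl⟩ t ⟨τ, rfl⟩ hne
  obtain ⟨x₀, hx₀⟩ := hne
  rcases le_total σ.length τ.length with h | h
  · have : cyl σ ∩ cyl τ = cyl τ := by
      refine Set.inter_eq_self_of_subset_right (cyl_inter_sub h x₀ hx₀)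
    rw [this]; exact ⟨τ, rfl⟩
  · have : cyl σ ∩ cyl τ = cyl σ := by
      refine Set.inter_eq_self_of_subset_left (cyl_inter_sub h x₀ ⟨hx₀.2, hx₀.1⟩)
    rw [this]; exact ⟨σ, rfl⟩

lemma ext_cyl {μ ν : Measure Omega} [IsProbabilityMeasure μ] [IsProbabilityMeasure ν]
    (h : ∀ σ : List Bool, μ (cyl σ) = ν (cyl σ)) : μ = ν := by
  refine MeasureTheory.ext_of_generate_finite (Set.range cyl) generateFrom_cyl isPiSystem_cyl
    ?_ (by simp)
  rintro s ⟨σ, rfl⟩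
  exact h σ

/-! ### Construction of the i.i.d. Bernoulli measures -/

noncomputable def stp (q x : ℝ) : ℝ := if x < q then x / q else (x - q) / (1 - q)

noncomputable def itr (q : ℝ) (n : ℕ) (x : ℝ) : ℝ := (stp q)^[n] x

noncomputable def Fq (q : ℝ) (x : ℝ) : Omega := fun n => decide (itr q n x < q)

lemma measurable_stp (q : ℝ) : Measurable (stp q) := by
  refine Measurable.ite (measurableSet_lt measurable_id measurable_const) ?_ ?_
  · exact measurable_id.div_const q
  · exact (measurable_id.sub_const q).div_const (1 - q)

lemma measurable_decide_lt (q : ℝ) : Measurable (fun y : ℝ => decide (y < q)) := by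
  refine measurable_to_countable' fun b => ?_
  cases b
  · have : (fun y : ℝ => decide (y < q)) ⁻¹' {false} = Set.Ici q := by
      ext y; simp [decide_eq_false_iff_not, not_lt]
    rw [this]; exact measurableSet_Ici
  · have : (fun y : ℝ => decide (y < q)) ⁻¹' {true} = Set.Iio q := by
      ext y; simp [decide_eq_true_eq]
    rw [this]; exact measurableSet_Iio

lemma measurable_itr (q : ℝ) (n : ℕ) : Measurable (itr q n) :=
  (measurable_stp q).iterate n

lemma measurable_Fq (q : ℝ) : Measurable (Fq q) :=
  measurable_pi_lambda _ fun n => (measurable_decide_lt q).comp (measurable_itr q n)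

lemma Fq_shift (q x : ℝ) : (fun n => Fq q x (n + 1)) = Fq q (stp q x) := by
  funext n
  simp only [Fq, itr, Function.iterate_succ_apply]
  congr 1

lemma cyl_cons (b : Bool) (σ : List Bool) :
    cyl (b :: σ) = {x : Omega | x 0 = b ∧ (fun n => x (n + 1)) ∈ cyl σ} := by
  ext x
  simp only [cyl, Set.mem_setOf_eq, List.length_cons, Fin.forall_fin_succ]
  constructor
  · rintro ⟨h0, hs⟩
    exact ⟨h0, fun i => hs i⟩
  · rintro ⟨h0, hs⟩
    exact ⟨h0, fun i => hs i⟩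

lemma Fq_preimage_cons (q : ℝ) (b : Bool) (σ : List Bool) :
    Fq q ⁻¹' cyl (b :: σ) =
      {x : ℝ | decide (x < q) = b} ∩ stp q ⁻¹' (Fq q ⁻¹' cyl σ) := by
  ext x
  simp only [Set.mem_preimage, cyl_cons, Set.mem_setOf_eq, Set.mem_inter_iff]
  constructor
  · rintro ⟨h0, hs⟩
    rw [Fq_shift] at hs
    exact ⟨h0, hs⟩
  · rintro ⟨h0, hs⟩
    refine ⟨h0, ?_⟩
    rw [Fq_shift]
    exact hs

lemma volume_Fq_cyl (q : unitInterval) (σ : List Bool) :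
    volume (Fq (q : ℝ) ⁻¹' cyl σ ∩ Set.Ico (0 : ℝ) 1) = ENNReal.ofReal (bern σ q) := by
  induction σ with
  | nil =>
      simp only [cyl_nil, Set.preimage_univ, Set.univ_inter, Real.volume_Ico, bern_nil]
      norm_num
  | cons b σ ih =>
      set A : Set ℝ := Fq (q : ℝ) ⁻¹' cyl σ with hA
      have hAm : MeasurableSet A := measurable_Fq _ (measurableSet_cyl σ)
      rw [Fq_preimage_cons, bern_cons]
      cases b
      · -- b = false
        by_cases hq1 : (1 : ℝ) ≤ (q : ℝ)
        · have hq1' : (q : ℝ) = 1 := le_antisymm q.2.2 hq1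
          have hempty : {x : ℝ | decide (x < (q:ℝ)) = false} ∩ stp q ⁻¹' A ∩ Set.Ico (0:ℝ) 1 = ∅ := by
            ext x
            simp only [Set.mem_inter_iff, Set.mem_setOf_eq, Set.mem_Ico, Set.mem_empty_iff_false,
              iff_false, not_and, decide_eq_false_iff_not, not_lt, and_imp]
            intro h _ _
            rw [hq1'] at h; linarith
          rw [hempty]
          have : bw q false = 0 := by
            have : bw q false = 1 - (q:ℝ) := rfl
            rw [this, hq1']; ring
          rw [this]
          simp
        · push_neg at hq1
          have h1q : (0:ℝ) < 1 - q := by linarith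
          have hset : {x : ℝ | decide (x < (q:ℝ)) = false} ∩ stp q ⁻¹' A ∩ Set.Ico (0:ℝ) 1 =
              (fun x : ℝ => (x - q) / (1 - q)) ⁻¹' (A ∩ Set.Ico (0:ℝ) 1) := by
            ext x
            simp only [Set.mem_inter_iff, Set.mem_setOf_eq, Set.mem_preimage, Set.mem_Ico,
              decide_eq_false_iff_not, not_lt]
            constructor
            · rintro ⟨⟨hge, hst⟩, hx0, hx1⟩
              have hstp : stp q x = (x - q) / (1 - q) := by
                rw [stp, if_neg (not_lt.2 hge)]
              rw [hstp] at hst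
              refine ⟨hst, ?_, ?_⟩
              · rw [le_div_iff₀ h1q]; linarith
              · rw [div_lt_one h1q]; linarith
            · rintro ⟨hst, hy0, hy1⟩
              rw [le_div_iff₀ h1q] at hy0
              rw [div_lt_one h1q] at hy1
              have hge : (q:ℝ) ≤ x := by linarith
              have hstp : stp q x = (x - q) / (1 - q) := by
                rw [stp, if_neg (not_lt.2 hge)]
              refine ⟨⟨hge, ?_⟩, ?_, ?_⟩
              · rw [hstp]; exact hst
              · linarith [q.2.1]
              · linarith
          rw [hset]
          have hcomp : (fun x : ℝ => (x - q) / (1 - q)) =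
              (fun y : ℝ => (1 - (q:ℝ))⁻¹ * y) ∘ (fun x : ℝ => -(q:ℝ) + x) := by
            funext x
            show (x - (q:ℝ)) / (1 - (q:ℝ)) = (1 - (q:ℝ))⁻¹ * (-(q:ℝ) + x)
            rw [div_eq_inv_mul]
            ring
          rw [hcomp, Set.preimage_comp]
          rw [measure_preimage_add volume (-(q:ℝ)) _]
          rw [Real.volume_preimage_mul_left (inv_ne_zero (ne_of_gt h1q))]
          rw [inv_inv, abs_of_pos h1q, ih]
          have hbw : bw q false = 1 - (q:ℝ) := rfl
          rw [hbw, ← ENNReal.ofReal_mul (le_of_lt h1q)]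
      · -- b = true
        by_cases hq0 : (q : ℝ) ≤ 0
        · have hq0' : (q : ℝ) = 0 := le_antisymm hq0 q.2.1
          have hempty : {x : ℝ | decide (x < (q:ℝ)) = true} ∩ stp q ⁻¹' A ∩ Set.Ico (0:ℝ) 1 = ∅ := by
            ext x
            simp only [Set.mem_inter_iff, Set.mem_setOf_eq, Set.mem_Ico, Set.mem_empty_iff_false,
              iff_false, not_and, decide_eq_true_eq, and_imp]
            intro h _ h2
            rw [hq0'] at h; linarith
          rw [hempty]
          have : bw q true = 0 := by
            have : bw q true = (q:ℝ) := rfl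
            rw [this, hq0']
          rw [this]
          simp
        · push_neg at hq0
          have hset : {x : ℝ | decide (x < (q:ℝ)) = true} ∩ stp q ⁻¹' A ∩ Set.Ico (0:ℝ) 1 =
              (fun x : ℝ => ((q:ℝ))⁻¹ * x) ⁻¹' (A ∩ Set.Ico (0:ℝ) 1) := by
            ext x
            simp only [Set.mem_inter_iff, Set.mem_setOf_eq, Set.mem_preimage, Set.mem_Ico,
              decide_eq_true_eq]
            constructor
            · rintro ⟨⟨hlt, hst⟩, hx0, hx1⟩
              have hstp : stp q x = x / q := by rw [stp, if_pos hlt]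
              rw [hstp, div_eq_inv_mul] at hst
              refine ⟨hst, ?_, ?_⟩
              · positivity
              · rw [← div_eq_inv_mul, div_lt_one hq0]; exact hlt
            · rintro ⟨hst, hy0, hy1⟩
              rw [← div_eq_inv_mul, div_lt_one hq0] at hy1
              have hx0 : 0 ≤ x := by
                by_contra hneg
                push_neg at hneg
                have : (q:ℝ)⁻¹ * x < 0 := mul_neg_of_pos_of_neg (inv_pos.2 hq0) hneg
                linarith
              have hstp : stp q x = x / q := by rw [stp, if_pos hy1]
              refine ⟨⟨hy1, ?_⟩, hx0, ?_⟩
              · rw [hstp, div_eq_inv_mul]; exact hst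
              · linarith [q.2.2]
          rw [hset]
          rw [Real.volume_preimage_mul_left (inv_ne_zero (ne_of_gt hq0))]
          rw [inv_inv, abs_of_pos hq0, ih]
          have hbw : bw q true = (q:ℝ) := rfl
          rw [hbw, ← ENNReal.ofReal_mul (le_of_lt hq0)]

noncomputable def iidM (q : unitInterval) : Measure Omega :=
  (volume.restrict (Set.Ico (0 : ℝ) 1)).map (Fq (q : ℝ))

instance : IsProbabilityMeasure (volume.restrict (Set.Ico (0 : ℝ) 1)) := by
  constructor
  rw [Measure.restrict_apply_univ, Real.volume_Ico]
  norm_num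

instance (q : unitInterval) : IsProbabilityMeasure (iidM q) :=
  Measure.isProbabilityMeasure_map (measurable_Fq _).aemeasurable

lemma iidM_cyl (q : unitInterval) (σ : List Bool) :
    iidM q (cyl σ) = ENNReal.ofReal (bern σ q) := by
  rw [iidM, Measure.map_apply (measurable_Fq _) (measurableSet_cyl σ),
    Measure.restrict_apply (measurable_Fq _ (measurableSet_cyl σ))]
  exact volume_Fq_cyl q σ

/-! ### Continuity of the Bernoulli family -/

lemma stp_mem (q : unitInterval) {x : ℝ} (hx : x ∈ Set.Ico (0:ℝ) 1) :
    stp (q : ℝ) x ∈ Set.Ico (0:ℝ) 1 := by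
  obtain ⟨hx0, hx1⟩ := hx
  by_cases h : x < (q : ℝ)
  · have hq0 : 0 < (q : ℝ) := lt_of_le_of_lt hx0 h
    rw [stp, if_pos h]
    exact ⟨div_nonneg hx0 (le_of_lt hq0), (div_lt_one hq0).2 h⟩
  · push_neg at h
    have hq1 : (q : ℝ) < 1 := lt_of_le_of_lt h hx1
    rw [stp, if_neg (not_lt.2 h)]
    constructor
    · exact div_nonneg (by linarith) (by linarith)
    · rw [div_lt_one (by linarith)]; linarith

lemma itr_mem (q : unitInterval) {x : ℝ} (hx : x ∈ Set.Ico (0:ℝ) 1) (n : ℕ) :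
    itr (q : ℝ) n x ∈ Set.Ico (0:ℝ) 1 := by
  induction n with
  | zero => exact hx
  | succ n ih =>
      rw [itr, Function.iterate_succ_apply']
      exact stp_mem q ih

lemma countable_bad_level (q : unitInterval) (n : ℕ) :
    (Set.Ico (0:ℝ) 1 ∩ itr (q : ℝ) n ⁻¹' {(q : ℝ)}).Countable := by
  induction n with
  | zero =>
      refine Set.Countable.mono ?_ (Set.countable_singleton (q : ℝ))
      rintro x ⟨-, hx⟩
      rw [Set.mem_preimage, Set.mem_singleton_iff] at hx
      exact hx
  | succ n ih =>
      have hstep : ∀ x : ℝ, itr (q:ℝ) (n+1) x = itr (q:ℝ) n (stp (q:ℝ) x) := fun x => by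
        rw [itr, Function.iterate_succ_apply]; rfl
      by_cases hq0 : (q : ℝ) = 0
      · refine Set.Countable.mono ?_ ih
        intro x hx
        obtain ⟨hxI, hxP⟩ := hx
        have hst : stp (q:ℝ) x = x := by
          rw [stp, if_neg (by rw [hq0]; exact not_lt.2 hxI.1), hq0]
          simp
        rw [Set.mem_preimage, Set.mem_singleton_iff, hstep, hst] at hxP
        exact ⟨hxI, hxP⟩
      · by_cases hq1 : (q : ℝ) = 1
        · refine Set.Countable.mono ?_ ih
          intro x hx
          obtain ⟨hxI, hxP⟩ := hx
          have hst : stp (q:ℝ) x = x := by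
            rw [stp, if_pos (by rw [hq1]; exact hxI.2), hq1]
            simp
          rw [Set.mem_preimage, Set.mem_singleton_iff, hstep, hst] at hxP
          exact ⟨hxI, hxP⟩
        · have hsub : Set.Ico (0:ℝ) 1 ∩ itr (q : ℝ) (n+1) ⁻¹' {(q : ℝ)} ⊆
              ((fun x : ℝ => x * ((q:ℝ))⁻¹) ⁻¹' (Set.Ico (0:ℝ) 1 ∩ itr (q : ℝ) n ⁻¹' {(q : ℝ)})) ∪
              ((fun x : ℝ => (x - (q:ℝ)) * ((1 - (q:ℝ)))⁻¹) ⁻¹'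
                (Set.Ico (0:ℝ) 1 ∩ itr (q : ℝ) n ⁻¹' {(q : ℝ)})) := by
            intro x hx
            obtain ⟨hxI, hxP⟩ := hx
            rw [Set.mem_preimage, Set.mem_singleton_iff, hstep] at hxP
            by_cases h : x < (q:ℝ)
            · left
              rw [Set.mem_preimage]
              have hst : stp (q:ℝ) x = x * ((q:ℝ))⁻¹ := by
                rw [stp, if_pos h, div_eq_mul_inv]
              refine ⟨?_, ?_⟩
              · rw [← hst]; exact stp_mem q hxI
              · rw [Set.mem_preimage, Set.mem_singleton_iff, ← hst]; exact hxP
            · right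
              rw [Set.mem_preimage]
              have hst : stp (q:ℝ) x = (x - (q:ℝ)) * ((1 - (q:ℝ)))⁻¹ := by
                rw [stp, if_neg h, div_eq_mul_inv]
              refine ⟨?_, ?_⟩
              · rw [← hst]; exact stp_mem q hxI
              · rw [Set.mem_preimage, Set.mem_singleton_iff, ← hst]; exact hxP
          refine Set.Countable.mono hsub (Set.Countable.union ?_ ?_)
          · exact ih.preimage (mul_left_injective₀ (inv_ne_zero hq0))
          · refine ih.preimage ?_
            have h1q : ((1:ℝ) - (q:ℝ))⁻¹ ≠ 0 := by
              refine inv_ne_zero ?_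
              intro h; apply hq1; linarith
            exact (mul_left_injective₀ h1q).comp sub_left_injective

open Topology

lemma tendsto_itr (q : unitInterval) {x : ℝ} (hx : x ∈ Set.Ico (0:ℝ) 1)
    (hbad : ∀ n, itr (q : ℝ) n x ≠ (q : ℝ)) (n : ℕ) :
    Tendsto (fun t : ℝ => itr t n x) (𝓝 (q : ℝ)) (𝓝 (itr (q : ℝ) n x)) := by
  induction n with
  | zero =>
      have : (fun t : ℝ => itr t 0 x) = fun _ => x := rfl
      rw [this]
      exact tendsto_const_nhds
  | succ n ih =>
      set r := itr (q : ℝ) n x with hr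
      have hrI : r ∈ Set.Ico (0:ℝ) 1 := itr_mem q hx n
      have hne := hbad n
      have hform : ∀ t : ℝ, itr t (n+1) x = stp t (itr t n x) := fun t => by
        rw [itr, Function.iterate_succ_apply']; rfl
      rcases lt_or_gt_of_ne hne with hlt | hgt
      · -- r < q
        have hq0 : 0 < (q : ℝ) := lt_of_le_of_lt hrI.1 hlt
        have hsub : Tendsto (fun t : ℝ => t - itr t n x) (𝓝 (q:ℝ)) (𝓝 ((q:ℝ) - r)) :=
          tendsto_id.sub ih
        have hev : ∀ᶠ t in 𝓝 (q:ℝ), itr t n x < t := by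
          have hpos : (0:ℝ) < (q:ℝ) - r := by linarith
          filter_upwards [hsub.eventually (eventually_gt_nhds hpos)] with t ht
          linarith
        have hval : itr (q:ℝ) (n+1) x = r / q := by
          rw [hform, ← hr, stp, if_pos hlt]
        rw [hval]
        have hlim : Tendsto (fun t : ℝ => itr t n x / t) (𝓝 (q:ℝ)) (𝓝 (r / q)) :=
          ih.div tendsto_id (ne_of_gt hq0)
        refine Tendsto.congr' ?_ hlim
        filter_upwards [hev] with t ht
        rw [hform, stp, if_pos ht]
      · -- r > q
        have hq1 : (q : ℝ) < 1 := lt_trans hgt hrI.2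
        have hsub : Tendsto (fun t : ℝ => itr t n x - t) (𝓝 (q:ℝ)) (𝓝 (r - (q:ℝ))) :=
          ih.sub tendsto_id
        have hev : ∀ᶠ t in 𝓝 (q:ℝ), ¬ itr t n x < t := by
          have hpos : (0:ℝ) < r - (q:ℝ) := by linarith
          filter_upwards [hsub.eventually (eventually_gt_nhds hpos)] with t ht
          intro hcon
          linarith
        have hval : itr (q:ℝ) (n+1) x = (r - q) / (1 - q) := by
          rw [hform, ← hr, stp, if_neg (not_lt.2 (le_of_lt hgt))]
        rw [hval]
        have hlim : Tendsto (fun t : ℝ => (itr t n x - t) / (1 - t)) (𝓝 (q:ℝ))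
            (𝓝 ((r - q) / (1 - q))) := by
          refine Tendsto.div (ih.sub tendsto_id) (tendsto_const_nhds.sub tendsto_id) ?_
          intro h; linarith
        refine Tendsto.congr' ?_ hlim
        filter_upwards [hev] with t ht
        rw [hform, stp, if_neg ht]

lemma tendsto_Fq (q : unitInterval) {x : ℝ} (hx : x ∈ Set.Ico (0:ℝ) 1)
    (hbad : ∀ n, itr (q : ℝ) n x ≠ (q : ℝ)) :
    Tendsto (fun t : ℝ => Fq t x) (𝓝 (q : ℝ)) (𝓝 (Fq (q : ℝ) x)) := by
  rw [tendsto_pi_nhds]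
  intro n
  set r := itr (q : ℝ) n x with hr
  have hev : ∀ᶠ t in 𝓝 (q:ℝ), Fq t x n = Fq (q:ℝ) x n := by
    rcases lt_or_gt_of_ne (hbad n) with hlt | hgt
    · have hsub : Tendsto (fun t : ℝ => t - itr t n x) (𝓝 (q:ℝ)) (𝓝 ((q:ℝ) - r)) :=
        tendsto_id.sub (tendsto_itr q hx hbad n)
      have hpos : (0:ℝ) < (q:ℝ) - r := by linarith
      filter_upwards [hsub.eventually (eventually_gt_nhds hpos)] with t ht
      have h1 : itr t n x < t := by linarith
      simp only [Fq]
      rw [decide_eq_true (by exact h1), decide_eq_true (by exact hlt)]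
    · have hsub : Tendsto (fun t : ℝ => itr t n x - t) (𝓝 (q:ℝ)) (𝓝 (r - (q:ℝ))) :=
        (tendsto_itr q hx hbad n).sub tendsto_id
      have hpos : (0:ℝ) < r - (q:ℝ) := by linarith
      filter_upwards [hsub.eventually (eventually_gt_nhds hpos)] with t ht
      have h1 : ¬ itr t n x < t := by intro h; linarith
      have h2 : ¬ r < (q:ℝ) := not_lt.2 (le_of_lt hgt)
      simp only [Fq]
      rw [decide_eq_false h1, decide_eq_false h2]
  exact Tendsto.congr' (by filter_upwards [hev] with t ht using ht.symm) tendsto_const_nhds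

noncomputable def iidP (q : unitInterval) : ProbabilityMeasure Omega := ⟨iidM q, inferInstance⟩

lemma iidP_mem (q : unitInterval) : iidP q ∈ IIDparadigm := ⟨q, fun σ => iidM_cyl q σ⟩

lemma continuous_iidP : Continuous iidP := by
  rw [continuous_iff_continuousAt]
  intro q
  rw [ContinuousAt, ProbabilityMeasure.tendsto_iff_forall_integral_tendsto]
  intro f
  have hrw : ∀ t : unitInterval, ∫ ω, f ω ∂((iidP t) : Measure Omega) =
      ∫ x, f (Fq (t : ℝ) x) ∂(volume.restrict (Set.Ico (0:ℝ) 1)) := by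
    intro t
    show ∫ ω, f ω ∂(iidM t) = _
    rw [iidM, integral_map (measurable_Fq _).aemeasurable
      f.continuous.measurable.aestronglyMeasurable]
  have hcont : ContinuousAt (fun t : unitInterval =>
      ∫ x, f (Fq (t : ℝ) x) ∂(volume.restrict (Set.Ico (0:ℝ) 1))) q := by
    refine continuousAt_of_dominated (bound := fun _ => ‖f‖) ?_ ?_ ?_ ?_
    · exact Eventually.of_forall fun t =>
        (f.continuous.measurable.comp (measurable_Fq _)).aestronglyMeasurable
    · exact Eventually.of_forall fun t => ae_of_all _ fun x => f.norm_coe_le_norm _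
    · exact integrable_const _
    · have h1 : ∀ᵐ x ∂(volume.restrict (Set.Ico (0:ℝ) 1)), x ∈ Set.Ico (0:ℝ) 1 :=
        ae_restrict_mem measurableSet_Ico
      have h2 : ∀ᵐ x ∂(volume.restrict (Set.Ico (0:ℝ) 1)),
          x ∉ ⋃ n, Set.Ico (0:ℝ) 1 ∩ itr (q : ℝ) n ⁻¹' {(q : ℝ)} := by
        have hcnt : (⋃ n, Set.Ico (0:ℝ) 1 ∩ itr (q : ℝ) n ⁻¹' {(q : ℝ)}).Countable :=
          Set.countable_iUnion fun n => countable_bad_level q n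
        have hz : (volume.restrict (Set.Ico (0:ℝ) 1))
            (⋃ n, Set.Ico (0:ℝ) 1 ∩ itr (q : ℝ) n ⁻¹' {(q : ℝ)}) = 0 := by
          refine le_antisymm (le_trans (Measure.restrict_apply_le _ _) ?_) zero_le
          exact le_of_eq (hcnt.measure_zero _)
        rw [ae_iff]
        simp only [not_not]
        rw [Set.setOf_mem_eq]
        exact hz
      filter_upwards [h1, h2] with x hxI hxB
      have hbad : ∀ n, itr (q : ℝ) n x ≠ (q : ℝ) := by
        intro n hc
        exact hxB (Set.mem_iUnion.2 ⟨n, hxI, by rw [Set.mem_preimage, Set.mem_singleton_iff]; exact hc⟩)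
      have hFq : Tendsto (fun t : unitInterval => Fq (t : ℝ) x) (𝓝 q) (𝓝 (Fq (q : ℝ) x)) :=
        (tendsto_Fq q hxI hbad).comp continuous_subtype_val.continuousAt
      exact (f.continuous.tendsto _).comp hFq
  have final : Tendsto (fun t : unitInterval => ∫ ω, f ω ∂((iidP t) : Measure Omega)) (𝓝 q)
      (𝓝 (∫ ω, f ω ∂((iidP q) : Measure Omega))) := by
    rw [hrw q]
    exact Tendsto.congr' (Eventually.of_forall fun t => (hrw t).symm) hcont
  exact final

/-! ### Topology of the paradigm -/

noncomputable instance : BorelSpace (ProbabilityMeasure Omega) := ⟨rfl⟩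

noncomputable instance : MeasurableSingletonClass (ProbabilityMeasure Omega) :=
  ⟨fun _ => isClosed_singleton.measurableSet⟩

lemma bern_single (t : unitInterval) : bern [true] t = (t : ℝ) := by
  have h : ([true] : List Bool) = true :: [] := rfl
  rw [h, bern_cons, bern_nil, mul_one]
  rfl

lemma param_eq {μ' : ProbabilityMeasure Omega} {t : unitInterval}
    (h : ∀ σ : List Bool, (μ' : Measure Omega) (cyl σ) = ENNReal.ofReal (bern σ t)) :
    μ' = iidP t := by
  have hm : (μ' : Measure Omega) = iidM t := by
    refine ext_cyl fun σ => ?_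
    rw [h σ, iidM_cyl]
  exact Subtype.ext hm

lemma iidP_injective : Function.Injective iidP := by
  intro s t h
  have h1 : iidM s (cyl [true]) = iidM t (cyl [true]) := by
    have : (iidP s : Measure Omega) = (iidP t : Measure Omega) := by rw [h]
    rw [show (iidP s : Measure Omega) = iidM s from rfl,
      show (iidP t : Measure Omega) = iidM t from rfl] at this
    rw [this]
  rw [iidM_cyl, iidM_cyl, bern_single, bern_single] at h1
  have := (ENNReal.ofReal_eq_ofReal_iff s.2.1 t.2.1).1 h1
  exact Subtype.ext this

lemma forecast_nil_eq {ν : ProbabilityMeasure Omega} {r : unitInterval}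
    (h : ∀ σ : List Bool, (ν : Measure Omega) (cyl σ) = ENNReal.ofReal (bern σ r)) :
    forecastOne (ν : Measure Omega) ([] : List Bool) = (r : ℝ) := by
  have happ : ([] : List Bool) ++ [true] = [true] := rfl
  rw [forecastOne, happ, h, h, bern_nil, bern_single]
  rw [ENNReal.toReal_ofReal r.2.1, ENNReal.ofReal_one, ENNReal.toReal_one, div_one]

section Gamma

abbrev Gam := {μ : ProbabilityMeasure Omega // μ ∈ IIDparadigm}

noncomputable def HofQ : unitInterval → Gam := fun t => ⟨iidP t, iidP_mem t⟩

lemma continuous_HofQ : Continuous HofQ :=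
  Continuous.subtype_mk continuous_iidP _

open Topology

lemma seq_approach (t : unitInterval) :
    ∃ v : ℕ → unitInterval, (∀ k, v k ≠ t) ∧
      Tendsto v atTop (𝓝 t) := by
  have hinv : Tendsto (fun k : ℕ => ((k : ℝ) + 2)⁻¹) atTop (𝓝 0) := by
    refine tendsto_inv_atTop_zero.comp ?_
    exact tendsto_atTop_add_const_right _ 2 tendsto_natCast_atTop_atTop
  have hinvpos : ∀ k : ℕ, (0:ℝ) < ((k : ℝ) + 2)⁻¹ := fun k => by positivity
  have hinvle : ∀ k : ℕ, ((k : ℝ) + 2)⁻¹ ≤ 1/2 := fun k => by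
    rw [show (1:ℝ)/2 = (2:ℝ)⁻¹ by norm_num]
    refine inv_anti₀ (by norm_num) ?_
    have : (0:ℝ) ≤ (k:ℝ) := Nat.cast_nonneg k
    linarith
  by_cases hle : (t : ℝ) ≤ 1/2
  · refine ⟨fun k => ⟨(t : ℝ) + ((k : ℝ) + 2)⁻¹, ?_, ?_⟩, ?_, ?_⟩
    · have := hinvpos k; linarith [t.2.1]
    · have := hinvle k; linarith
    · intro k hk
      have := congrArg (fun z : unitInterval => (z : ℝ)) hk
      simp only at this
      have := hinvpos k; linarith
    · rw [tendsto_subtype_rng]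
      have : Tendsto (fun k : ℕ => (t : ℝ) + ((k : ℝ) + 2)⁻¹) atTop (𝓝 ((t:ℝ) + 0)) :=
        tendsto_const_nhds.add hinv
      simpa using this
  · push_neg at hle
    refine ⟨fun k => ⟨(t : ℝ) - ((k : ℝ) + 2)⁻¹, ?_, ?_⟩, ?_, ?_⟩
    · have := hinvle k; linarith
    · have := hinvpos k; linarith [t.2.2]
    · intro k hk
      have := congrArg (fun z : unitInterval => (z : ℝ)) hk
      simp only at this
      have := hinvpos k; linarith
    · rw [tendsto_subtype_rng]
      have : Tendsto (fun k : ℕ => (t : ℝ) - ((k : ℝ) + 2)⁻¹) atTop (𝓝 ((t:ℝ) - 0)) :=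
        tendsto_const_nhds.sub hinv
      simpa using this

lemma singleton_not_open (μ' : Gam) : ¬ IsOpen ({μ'} : Set Gam) := by
  intro hopen
  obtain ⟨t, ht⟩ := μ'.2
  have hμ : μ'.1 = iidP t := param_eq ht
  have hHt : HofQ t = μ' := by
    refine Subtype.ext ?_
    rw [hμ]
    rfl
  obtain ⟨v, hvne, hvt⟩ := seq_approach t
  have htend : Tendsto (fun k => HofQ (v k)) atTop (𝓝 μ') := by
    rw [← hHt]
    exact (continuous_HofQ.tendsto t).comp hvt
  have hev : ∀ᶠ k in atTop, HofQ (v k) ∈ ({μ'} : Set Gam) :=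
    htend (hopen.mem_nhds rfl)
  obtain ⟨k, hk⟩ := hev.exists
  rw [Set.mem_singleton_iff, ← hHt] at hk
  have : iidP (v k) = iidP t := congrArg Subtype.val hk
  exact hvne k (iidP_injective this)

lemma singleton_nowhereDense (μ' : Gam) : IsNowhereDense ({μ'} : Set Gam) := by
  rw [IsClosed.isNowhereDense_iff isClosed_singleton]
  by_contra hne
  have hsub : interior ({μ'} : Set Gam) ⊆ {μ'} := interior_subset
  have hint : interior ({μ'} : Set Gam) = {μ'} := by
    rcases Set.eq_empty_or_nonempty (interior ({μ'} : Set Gam)) with h | h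
    · exact absurd h hne
    · obtain ⟨x, hx⟩ := h
      have hx' : x = μ' := hsub hx
      refine Set.Subset.antisymm hsub ?_
      intro y hy
      rw [Set.mem_singleton_iff] at hy
      subst hx'
      rw [hy]
      exact hx
  exact singleton_not_open μ' (hint ▸ isOpen_interior)

end Gamma

/-- Example 1: the test that passes the expert iff every forecast equals the limsup
empirical frequency accepts every i.i.d. data generating process with probability 1 and
is strongly non-manipulable w.r.t. the paradigm of i.i.d. theories. -/
theorem iid_paradigm_test
    (T : (ℕ → ℝ × Bool) → Bool)
    (hT : ∀ f : ℕ → ℝ × Bool,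
      T f = true ↔ ∀ n : ℕ, (f n).1 = limAvg (fun k => (f k).2)) :
    (∀ μ : ProbabilityMeasure Omega, μ ∈ IIDparadigm →
      (μ : Measure Omega) (acceptSet T (μ : Measure Omega)) = 1) ∧
    (∀ ζ : Measure {μ : ProbabilityMeasure Omega // μ ∈ IIDparadigm},
      IsProbabilityMeasure ζ →
      {μ : {μ : ProbabilityMeasure Omega // μ ∈ IIDparadigm} |
          (ζ.prod (μ.1 : Measure Omega))
            {p : {μ : ProbabilityMeasure Omega // μ ∈ IIDparadigm} × Omega |
              p.2 ∈ acceptSet T (p.1.1 : Measure Omega)} = 0}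
        ∈ residual {μ : ProbabilityMeasure Omega // μ ∈ IIDparadigm}) := by
  constructor
  · intro μ hμ
    obtain ⟨q, hq⟩ := hμ
    exact accept_prob_one hq T hT
  · intro ζ hζ
    haveI := hζ
    have hsub : {μ' : Gam | ζ {μ'} = 0} ⊆ {μ' : Gam |
        (ζ.prod (μ'.1 : Measure Omega))
          {p : Gam × Omega | p.2 ∈ acceptSet T (p.1.1 : Measure Omega)} = 0} := by
      intro μ' hz0
      simp only [Set.mem_setOf_eq] at hz0 ⊢
      obtain ⟨t, ht⟩ := μ'.2
      have hsl := slln ht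
      rw [ae_iff] at hsl
      obtain ⟨M, hMsub, hMmeas, hM0⟩ := exists_measurable_superset_of_null hsl
      have hSsub : {p : Gam × Omega | p.2 ∈ acceptSet T (p.1.1 : Measure Omega)} ⊆
          (({μ'} : Set Gam) ×ˢ (Set.univ : Set Omega)) ∪ ((Set.univ : Set Gam) ×ˢ M) := by
        rintro ⟨ν, x⟩ hx
        simp only [Set.mem_setOf_eq] at hx
        by_cases hν : ν = μ'
        · left
          exact ⟨hν, trivial⟩
        · right
          refine ⟨trivial, hMsub ?_⟩
          obtain ⟨r, hr⟩ := ν.2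
          have hf0 := (hT _).1 hx.2 0
          simp only at hf0
          rw [pref_zero] at hf0
          have hfr : forecastOne (ν.1 : Measure Omega) ([] : List Bool) = (r:ℝ) :=
            forecast_nil_eq hr
          have hlim : limAvg (fun k => x k) = (r : ℝ) := by rw [← hf0, hfr]
          have hrt : r ≠ t := by
            intro hc
            apply hν
            apply Subtype.ext
            rw [param_eq hr, param_eq ht, hc]
          simp only [Set.mem_setOf_eq]
          intro hten
          have hlt : limAvg (fun k => x k) = (t : ℝ) := hten.limsup_eq
          rw [hlim] at hlt
          exact hrt (Subtype.ext hlt)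
      refine le_antisymm ?_ zero_le
      refine le_trans (measure_mono hSsub) ?_
      refine le_trans (measure_union_le _ _) ?_
      rw [Measure.prod_prod, Measure.prod_prod, hz0, hM0]
      simp
    refine Filter.mem_of_superset ?_ hsub
    have hcnt : ({μ' : Gam | ζ {μ'} ≠ 0}).Countable := by
      have hc := Measure.countable_meas_pos_of_disjoint_iUnion (μ := ζ)
        (As := fun μ' : Gam => ({μ'} : Set Gam)) (fun i => measurableSet_singleton i)
        (fun i j hij => by
          simp only [Function.onFun]
          exact Set.disjoint_singleton.2 hij)
      refine Set.Countable.mono ?_ hc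
      intro μ'' hμ''
      simp only [Set.mem_setOf_eq] at hμ'' ⊢
      exact pos_iff_ne_zero.2 hμ''
    have hmg : IsMeagre {μ' : Gam | ζ {μ'} ≠ 0} := by
      rw [isMeagre_iff_countable_union_isNowhereDense]
      refine ⟨(fun μ'' : Gam => ({μ''} : Set Gam)) '' {μ' : Gam | ζ {μ'} ≠ 0}, ?_,
        hcnt.image _, ?_⟩
      · rintro s ⟨μ'', -, rfl⟩
        exact singleton_nowhereDense μ''
      · intro μ'' hμ''
        exact ⟨{μ''}, Set.mem_image_of_mem _ hμ'', rfl⟩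
    have hDc : {μ' : Gam | ζ {μ'} = 0} = {μ' : Gam | ζ {μ'} ≠ 0}ᶜ := by
      ext μ''
      simp
    rw [hDc]
    exact hmg
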